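/- Under the OSAVI recursion with $\alpha_0 = 1$ and $c \ne 0$, $\lim_{n\to\infty} \delta^n = \frac{1}{1-\gamma}$. -/

import Mathlib

set_option maxHeartbeats 1000000 in
theorem stmt_15 (γ c σ2 : ℝ) (hγ0 : 0 < γ) (hγ1 : γ < 1) (hσ : 0 < σ2) (hc : c ≠ 0)
    (α δ lam : ℕ → ℝ)
    (hα0 : α 0 = 1) (hδ1 : δ 1 = 1) (hlam1 : lam 1 = 1)
    (hα : ∀ n : ℕ, 1 ≤ n →
      α n = ((1 - γ) * lam n * σ2 + (1 - (1 - γ) * δ n) ^ 2 * c ^ 2) /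
            ((1 - γ) ^ 2 * lam n * σ2 + (1 - (1 - γ) * δ n) ^ 2 * c ^ 2 + σ2))
    (hδ : ∀ n : ℕ, 1 ≤ n → δ (n + 1) = α n + (1 - (1 - γ) * α n) * δ n)
    (hlam : ∀ n : ℕ, 1 ≤ n → lam (n + 1) = (α n) ^ 2 + (1 - (1 - γ) * α n) ^ 2 * lam n) :
    Filter.Tendsto δ Filter.atTop (nhds (1 / (1 - γ))) := by
  have hb0 : (0:ℝ) < 1 - γ := by linarith
  have hc2 : (0:ℝ) < c ^ 2 := by positivity
  set e : ℕ → ℝ := fun n => 1 - (1 - γ) * δ n with he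
  -- basic positivity of α given lam n > 0, plus (1-γ)*α n < 1
  have halpha : ∀ n, 1 ≤ n → 0 < lam n →
      0 < α n ∧ (1 - γ) * α n < 1 := by
    intro n hn hl
    have hden : 0 < (1 - γ) ^ 2 * lam n * σ2 + (1 - (1 - γ) * δ n) ^ 2 * c ^ 2 + σ2 := by
      positivity
    have hnum : 0 < (1 - γ) * lam n * σ2 + (1 - (1 - γ) * δ n) ^ 2 * c ^ 2 := by
      positivity
    rw [hα n hn]
    constructor
    · exact div_pos hnum hden
    · rw [mul_div_assoc', div_lt_one hden]
      nlinarith [mul_nonneg hγ0.le (mul_nonneg (sq_nonneg (1 - (1 - γ) * δ n)) hc2.le)]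
  -- main invariant
  have key : ∀ n, 1 ≤ n → 0 < lam n ∧ 0 < e n ∧ e n ≤ γ := by
    intro n hn
    induction n with
    | zero => omega
    | succ m ih =>
      rcases Nat.lt_or_ge m 1 with h1 | h1
      · interval_cases m
        refine ⟨by rw [hlam1]; norm_num, ?_, ?_⟩ <;> simp [he, hδ1] <;> linarith
      · obtain ⟨hlm, hem, hem'⟩ := ih h1
        obtain ⟨ha0, ha1⟩ := halpha m h1 hlm
        have hrec : e (m + 1) = (1 - (1 - γ) * α m) * e m := by
          simp only [he, hδ m h1]; ring
        refine ⟨?_, ?_, ?_⟩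
        · rw [hlam m h1]; positivity
        · rw [hrec]; exact mul_pos (by linarith) hem
        · rw [hrec]
          nlinarith [mul_pos (mul_pos hb0 ha0) hem]
  have hrec : ∀ n, 1 ≤ n → e (n + 1) = (1 - (1 - γ) * α n) * e n := by
    intro n hn; simp only [he, hδ n hn]; ring
  -- lower bound on α when e n ≥ ε
  have halow : ∀ ε : ℝ, 0 < ε → ∀ n, 1 ≤ n → ε ≤ e n →
      ε ^ 2 * c ^ 2 / (γ ^ 2 * c ^ 2 + σ2) ≤ α n := by
    intro ε hε n hn hen
    obtain ⟨hlm, hem, hem'⟩ := key n hn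
    have hden : 0 < (1 - γ) ^ 2 * lam n * σ2 + (1 - (1 - γ) * δ n) ^ 2 * c ^ 2 + σ2 := by
      positivity
    have hden2 : (0:ℝ) < γ ^ 2 * c ^ 2 + σ2 := by positivity
    rw [hα n hn, div_le_div_iff₀ hden2 hden]
    have heq : (1 - (1 - γ) * δ n) = e n := rfl
    rw [heq]
    have h1 : ε ^ 2 ≤ e n ^ 2 := by nlinarith
    have h2 : e n ^ 2 ≤ γ ^ 2 := by nlinarith
    have hls : 0 < lam n * σ2 := mul_pos hlm hσ
    have a1 : ε ^ 2 * c ^ 2 ≤ γ ^ 2 * c ^ 2 :=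
      mul_le_mul_of_nonneg_right (le_trans h1 h2) hc2.le
    have a0 : ε ^ 2 * c ^ 2 ≤ e n ^ 2 * c ^ 2 :=
      mul_le_mul_of_nonneg_right h1 hc2.le
    have a2 : (1 - γ) ^ 2 * lam n * σ2 ≤ (1 - γ) * lam n * σ2 := by
      nlinarith [mul_pos (mul_pos hγ0 hb0) hls]
    have t1 : ε ^ 2 * c ^ 2 * ((1 - γ) ^ 2 * lam n * σ2) ≤ γ ^ 2 * c ^ 2 * ((1 - γ) * lam n * σ2) :=
      mul_le_mul a1 a2 (by positivity) (by positivity)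
    have t2 : ε ^ 2 * c ^ 2 * (e n ^ 2 * c ^ 2) ≤ γ ^ 2 * c ^ 2 * (e n ^ 2 * c ^ 2) :=
      mul_le_mul_of_nonneg_right a1 (by positivity)
    have t3 : ε ^ 2 * c ^ 2 * σ2 ≤ e n ^ 2 * c ^ 2 * σ2 :=
      mul_le_mul_of_nonneg_right a0 hσ.le
    nlinarith [mul_pos (mul_pos (mul_pos hb0 hlm) hσ) hσ, t1, t2, t3]
  -- δ n < 1/(1-γ)
  have hδlt : ∀ n, 1 ≤ n → δ n < 1 / (1 - γ) := by
    intro n hn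
    have := (key n hn).2.1
    rw [lt_div_iff₀ hb0]
    simp only [he] at this
    nlinarith
  -- e n gets arbitrarily small
  have hsmall : ∀ ε : ℝ, 0 < ε → ∃ N, 1 ≤ N ∧ e N < ε := by
    intro ε hε
    by_contra hcon
    push_neg at hcon
    have ha0 : 0 < ε ^ 2 * c ^ 2 / (γ ^ 2 * c ^ 2 + σ2) := by positivity
    set a := ε ^ 2 * c ^ 2 / (γ ^ 2 * c ^ 2 + σ2) with ha
    -- increments
    have hinc : ∀ n, 1 ≤ n → δ n + a * ε ≤ δ (n + 1) := by
      intro n hn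
      have h1 := hcon n hn
      have h2 := halow ε hε n hn h1
      have h3 := (key n hn).2.1
      have h5 : δ (n+1) - δ n = α n * e n := by
        rw [hδ n hn]; simp only [he]; ring
      have h4 : a * ε ≤ α n * e n :=
        mul_le_mul h2 h1 hε.le (le_trans ha0.le h2)
      linarith
    have hgrow : ∀ k : ℕ, 1 + (k : ℝ) * (a * ε) ≤ δ (k + 1) := by
      intro k
      induction k with
      | zero => simp [hδ1]
      | succ j ihj =>
        have h6 := hinc (j + 1) (by omega)
        push_cast
        push_cast at ihj
        linarith
    obtain ⟨k, hk⟩ := exists_nat_gt ((1 / (1 - γ) - 1) / (a * ε))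
    have haε : 0 < a * ε := mul_pos ha0 hε
    have h1 : (1 / (1 - γ) - 1) < k * (a * ε) := by
      rw [div_lt_iff₀ haε] at hk; linarith
    have h2 := hgrow k
    have h3 := hδlt (k + 1) (by omega)
    linarith
  -- e is antitone for indices ≥ 1
  have hanti : ∀ N n, 1 ≤ N → N ≤ n → e n ≤ e N := by
    intro N n hN hNn
    induction n with
    | zero => omega
    | succ m ihm =>
      rcases Nat.lt_or_ge m N with h | h
      · have : N = m + 1 := by omega
        rw [this]
      · have hm1 : 1 ≤ m := le_trans hN h
        have := ihm h
        obtain ⟨hlm, hem, _⟩ := key m hm1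
        obtain ⟨ha0, ha1⟩ := halpha m hm1 hlm
        rw [hrec m hm1]
        have h7 : (1 - (1 - γ) * α m) * e m ≤ 1 * e m :=
          mul_le_mul_of_nonneg_right (by linarith [mul_pos hb0 ha0]) hem.le
        rw [one_mul] at h7
        linarith
  -- conclude
  rw [Metric.tendsto_atTop]
  intro ε hε
  obtain ⟨N, hN1, hNe⟩ := hsmall ((1 - γ) * ε) (by positivity)
  refine ⟨N, fun n hn => ?_⟩
  have h1 := hanti N n hN1 hn
  have h2 := (key n (le_trans hN1 hn)).2.1
  rw [Real.dist_eq, abs_lt]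
  have hδn : δ n = (1 - e n) / (1 - γ) := by
    simp only [he]; field_simp; ring
  rw [hδn]
  have heq : (1 - e n) / (1 - γ) - 1 / (1 - γ) = -(e n / (1 - γ)) := by
    field_simp; ring
  rw [heq]
  have h3 : e n / (1 - γ) < ε := by rw [div_lt_iff₀ hb0]; linarith
  have h4 : 0 < e n / (1 - γ) := div_pos h2 hb0
  constructor <;> linarith
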